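/- In KSPM(p), during an avalanche (the leftmost stabilization sequence from π(k−1)^{↓0} to π(k)), each column is fired at most once. -/

import Mathlib

def fires (p : ℕ) (b b' : ℕ → ℤ) (i : ℕ) : Prop :=
  (p : ℤ) < b i ∧
  b' i = b i - (p + 1) ∧
  b' (i + p) = b (i + p) + 1 ∧
  (1 ≤ i → b' (i - 1) = b (i - 1) + p) ∧
  ∀ j : ℕ, j ≠ i → j ≠ i + p → (i = 0 ∨ j ≠ i - 1) → b' j = b j

def kstep (p : ℕ) (b b' : ℕ → ℤ) : Prop := ∃ i, fires p b b' i

def stable (p : ℕ) (b : ℕ → ℤ) : Prop := ∀ i, b i ≤ (p : ℤ)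

def initial (N : ℕ) : ℕ → ℤ := fun i => if i = 0 then (N : ℤ) else 0

def addGrain (σ : ℕ → ℤ) : ℕ → ℤ := fun i => if i = 0 then σ 0 + 1 else σ i

def stabilizesTo (p : ℕ) (b c : ℕ → ℤ) : Prop :=
  Relation.ReflTransGen (kstep p) b c ∧ stable p c

/-- During an avalanche (the leftmost stabilization sequence from
`π(k-1)^{↓0}` to `π(k)`), each column is fired at most once. -/
theorem avalanche_fires_each_column_at_most_once
    (p k n : ℕ) (hp : 0 < p) (hk : 0 < k)
    (c : ℕ → ℤ) (hc : stabilizesTo p (initial (k - 1)) c)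
    (f : Fin (n + 1) → ℕ → ℤ) (s : Fin n → ℕ)
    (h0 : f 0 = addGrain c)
    (hstep : ∀ m : Fin n, fires p (f m.castSucc) (f m.succ) (s m))
    (hleftmost : ∀ m : Fin n, ∀ i : ℕ, (p : ℤ) < f m.castSucc i → s m ≤ i)
    (hlast : stable p (f (Fin.last n))) :
    Function.Injective s := by
  classical
  obtain ⟨-, hcs⟩ := hc
  -- fired predicates
  have key : ∀ t : ℕ, ∀ ht : t ≤ n,
      (∀ m1 m2 : Fin n, (m1 : ℕ) < t → (m2 : ℕ) < t → s m1 = s m2 → m1 = m2) ∧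
      (∀ j : ℕ, f ⟨t, Nat.lt_succ_of_le ht⟩ j =
        c j + (if j = 0 then 1 else 0)
          + (p : ℤ) * (if ∃ m : Fin n, (m : ℕ) < t ∧ s m = j + 1 then 1 else 0)
          + (if ∃ m : Fin n, (m : ℕ) < t ∧ s m + p = j then 1 else 0)
          - ((p : ℤ) + 1) * (if ∃ m : Fin n, (m : ℕ) < t ∧ s m = j then 1 else 0)) := by
    intro t
    induction t with
    | zero =>
      intro _
      refine ⟨fun m1 m2 h1 => absurd h1 (Nat.not_lt_zero _), fun j => ?_⟩
      have : (⟨0, Nat.lt_succ_of_le (Nat.zero_le n)⟩ : Fin (n+1)) = 0 := rfl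
      rw [this, h0]
      simp [addGrain]
      by_cases hj : j = 0 <;> simp [hj] <;> ring
    | succ t ih =>
      intro ht
      have htn : t < n := ht
      have iht := ih (Nat.le_of_lt htn)
      obtain ⟨ihinj, ihval⟩ := iht
      set m : Fin n := ⟨t, htn⟩ with hm
      have hcast : m.castSucc = (⟨t, Nat.lt_succ_of_le (Nat.le_of_lt htn)⟩ : Fin (n+1)) := rfl
      have hsuccf : m.succ = (⟨t + 1, Nat.lt_succ_of_le ht⟩ : Fin (n+1)) := rfl
      obtain ⟨hfire1, hfire2, hfire3, hfire4, hfire5⟩ := hstep m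
      set i := s m with hi
      -- s m not fired before
      have hnotfired : ¬ ∃ m' : Fin n, (m' : ℕ) < t ∧ s m' = i := by
        intro hex
        have hv := ihval i
        rw [← hcast] at hv
        rw [if_pos hex] at hv
        have hci : c i ≤ (p : ℤ) := hcs i
        have h1 : ((p : ℤ)) * (if ∃ m' : Fin n, (m' : ℕ) < t ∧ s m' = i + 1 then (1:ℤ) else 0) ≤ p := by
          split
          · norm_num
          · simp
        have hnf : ¬ ((p : ℤ) < f m.castSucc i) := by
          by_cases h : i = 0
          · have hB : (if ∃ m' : Fin n, (m' : ℕ) < t ∧ s m' + p = i then (1:ℤ) else 0) = 0 := by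
              rw [if_neg]; rintro ⟨m'', -, hm''⟩; omega
            rw [hB, if_pos h] at hv
            rw [hv]; push_neg; linarith
          · have hB : (if ∃ m' : Fin n, (m' : ℕ) < t ∧ s m' + p = i then (1:ℤ) else 0) ≤ 1 := by
              split <;> norm_num
            rw [if_neg h] at hv
            rw [hv]; push_neg; linarith
        exact hnf hfire1
      -- extended injectivity
      have hinj' : ∀ m1 m2 : Fin n, (m1 : ℕ) < t + 1 → (m2 : ℕ) < t + 1 → s m1 = s m2 → m1 = m2 := by
        intro m1 m2 h1 h2 hs12
        rcases Nat.lt_succ_iff_lt_or_eq.mp h1 with h1' | h1' <;>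
          rcases Nat.lt_succ_iff_lt_or_eq.mp h2 with h2' | h2'
        · exact ihinj m1 m2 h1' h2' hs12
        · have hm2 : m2 = m := Fin.ext h2'
          subst hm2
          exact absurd ⟨m1, h1', hs12⟩ hnotfired
        · have hm1 : m1 = m := Fin.ext h1'
          subst hm1
          exact absurd ⟨m2, h2', hs12.symm⟩ hnotfired
        · exact Fin.ext (h1'.trans h2'.symm)
      refine ⟨hinj', fun j => ?_⟩
      -- membership update lemmas
      have mem_succ : ∀ j' : ℕ, (∃ m' : Fin n, (m' : ℕ) < t + 1 ∧ s m' = j') ↔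
          ((∃ m' : Fin n, (m' : ℕ) < t ∧ s m' = j') ∨ j' = i) := by
        intro j'
        constructor
        · rintro ⟨m', hmt, hms⟩
          rcases Nat.lt_succ_iff_lt_or_eq.mp hmt with h' | h'
          · exact Or.inl ⟨m', h', hms⟩
          · right; rw [← hms]; congr 1; exact (Fin.ext h' : m' = m)
        · rintro (⟨m', h', hms⟩ | h')
          · exact ⟨m', Nat.lt_succ_of_lt h', hms⟩
          · exact ⟨m, Nat.lt_succ_self t, h'.symm⟩
      have memp_succ : ∀ j' : ℕ, (∃ m' : Fin n, (m' : ℕ) < t + 1 ∧ s m' + p = j') ↔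
          ((∃ m' : Fin n, (m' : ℕ) < t ∧ s m' + p = j') ∨ j' = i + p) := by
        intro j'
        constructor
        · rintro ⟨m', hmt, hms⟩
          rcases Nat.lt_succ_iff_lt_or_eq.mp hmt with h' | h'
          · exact Or.inl ⟨m', h', hms⟩
          · right; rw [← hms]; congr 1; exact congrArg s (Fin.ext h' : m' = m)
        · rintro (⟨m', h', hms⟩ | h')
          · exact ⟨m', Nat.lt_succ_of_lt h', hms⟩
          · exact ⟨m, Nat.lt_succ_self t, h'.symm⟩
      rw [← hsuccf]
      have hvj := ihval j
      rw [← hcast] at hvj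
      -- case analysis on j
      by_cases hji : j = i
      · subst hji
        rw [hfire2, hvj]
        have e1 : (∃ m' : Fin n, (m' : ℕ) < t + 1 ∧ s m' = i) := ⟨m, Nat.lt_succ_self t, rfl⟩
        have e2 : (∃ m' : Fin n, (m' : ℕ) < t + 1 ∧ s m' = i + 1) ↔
            (∃ m' : Fin n, (m' : ℕ) < t ∧ s m' = i + 1) := by
          rw [mem_succ]
          have : ¬ (i + 1 = i) := by omega
          simp [this]
        have e3 : (∃ m' : Fin n, (m' : ℕ) < t + 1 ∧ s m' + p = i) ↔
            (∃ m' : Fin n, (m' : ℕ) < t ∧ s m' + p = i) := by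
          rw [memp_succ]
          have : ¬ (i = i + p) := by omega
          simp [this, hp.ne']
        rw [if_pos e1, if_neg hnotfired]
        simp only [e2, e3]
        ring
      · by_cases hjp : j = i + p
        · subst hjp
          rw [hfire3, hvj]
          have hne : ¬ (i + p = i) := by omega
          have e1 : (∃ m' : Fin n, (m' : ℕ) < t + 1 ∧ s m' = i + p) ↔
              (∃ m' : Fin n, (m' : ℕ) < t ∧ s m' = i + p) := by
            rw [mem_succ]; simp [hne, hp.ne']
          have e2 : (∃ m' : Fin n, (m' : ℕ) < t + 1 ∧ s m' = i + p + 1) ↔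
              (∃ m' : Fin n, (m' : ℕ) < t ∧ s m' = i + p + 1) := by
            rw [mem_succ]
            have : ¬ (i + p + 1 = i) := by omega
            simp [this]
          have e3 : (∃ m' : Fin n, (m' : ℕ) < t + 1 ∧ s m' + p = i + p) := ⟨m, Nat.lt_succ_self t, rfl⟩
          have e3' : ¬ (∃ m' : Fin n, (m' : ℕ) < t ∧ s m' + p = i + p) := by
            intro ⟨m', h', hms⟩
            exact hnotfired ⟨m', h', by omega⟩
          rw [if_pos e3, if_neg e3']
          simp only [e1, e2]
          ring
        · by_cases hjm : 1 ≤ i ∧ j = i - 1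
          · obtain ⟨hi1, hjm⟩ := hjm
            subst hjm
            rw [hfire4 hi1, hvj]
            have e1 : (∃ m' : Fin n, (m' : ℕ) < t + 1 ∧ s m' = i - 1) ↔
                (∃ m' : Fin n, (m' : ℕ) < t ∧ s m' = i - 1) := by
              rw [mem_succ]
              have : ¬ (i - 1 = i) := by omega
              simp [this]
            have e2 : (∃ m' : Fin n, (m' : ℕ) < t + 1 ∧ s m' = i - 1 + 1) := by
              refine ⟨m, Nat.lt_succ_self t, by omega⟩
            have e2' : ¬ (∃ m' : Fin n, (m' : ℕ) < t ∧ s m' = i - 1 + 1) := by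
              intro ⟨m', h', hms⟩
              exact hnotfired ⟨m', h', by omega⟩
            have e3 : (∃ m' : Fin n, (m' : ℕ) < t + 1 ∧ s m' + p = i - 1) ↔
                (∃ m' : Fin n, (m' : ℕ) < t ∧ s m' + p = i - 1) := by
              rw [memp_succ]
              have : ¬ (i - 1 = i + p) := by omega
              simp [this]
            rw [if_pos e2, if_neg e2']
            simp only [e1, e3]
            ring
          · have hcond : i = 0 ∨ j ≠ i - 1 := by
              rcases Nat.eq_zero_or_pos i with h | h
              · exact Or.inl h
              · exact Or.inr (fun hc => hjm ⟨h, hc⟩)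
            rw [hfire5 j hji hjp hcond, hvj]
            have e1 : (∃ m' : Fin n, (m' : ℕ) < t + 1 ∧ s m' = j) ↔
                (∃ m' : Fin n, (m' : ℕ) < t ∧ s m' = j) := by
              rw [mem_succ]; simp [hji]
            have hj1 : ¬ (j + 1 = i) := by omega
            have e2 : (∃ m' : Fin n, (m' : ℕ) < t + 1 ∧ s m' = j + 1) ↔
                (∃ m' : Fin n, (m' : ℕ) < t ∧ s m' = j + 1) := by
              rw [mem_succ]; simp [hj1]
            have e3 : (∃ m' : Fin n, (m' : ℕ) < t + 1 ∧ s m' + p = j) ↔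
                (∃ m' : Fin n, (m' : ℕ) < t ∧ s m' + p = j) := by
              rw [memp_succ]; simp [hjp]
            simp only [e1, e2, e3]
  intro m1 m2 hs
  exact (key n le_rfl).1 m1 m2 m1.isLt m2.isLt hs
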